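/- arXiv:2112.13424 — 2 statements merged into one kernel-verified Lean document; each statement's English description precedes it below -/
import Mathlib

section
/- Let r and m be coprime positive integers. Then the sum over j from 1 to m-1-⌊m/r⌋ of j·s_j equals (m-1)(r-1)/2, where s_j = l_j - l_{j+1} for j < m-1-⌊m/r⌋, s_{m-1-⌊m/r⌋} = l_{m-1-⌊m/r⌋} - 1, and l_j = r - ⌊rj/m⌋. -/
/-- Telescoping sum in ℤ. -/
lemma stmt2_tele (f : ℕ → ℤ) (N : ℕ) :
    ∑ j ∈ Finset.Icc 1 N, (j : ℤ) * (f j - f (j+1)) =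
      (∑ j ∈ Finset.Icc 1 N, f j) - N * f (N+1) := by
  induction N with
  | zero => simp
  | succ n ih =>
    rw [Finset.sum_Icc_succ_top (by omega), Finset.sum_Icc_succ_top (by omega), ih]
    push_cast; ring

/-- Complementary floors. -/
lemma stmt2_pair (r m a b : ℕ) (hm : 0 < m) (hab : a + b = r * m) (ha : ¬ m ∣ a) :
    a / m + b / m = r - 1 := by
  have h1 := Nat.div_add_mod a m
  have h2 := Nat.div_add_mod b m
  have hlt1 := Nat.mod_lt a hm
  have hlt2 := Nat.mod_lt b hm
  have ha0 : a % m ≠ 0 := fun h => ha (Nat.dvd_of_mod_eq_zero h)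
  have hdvd : m ∣ (a % m + b % m) := by
    have h0 : (a + b) % m = 0 := by rw [hab]; exact Nat.mul_mod_left r m
    have h3 := Nat.add_mod a b m
    exact Nat.dvd_of_mod_eq_zero (by rw [← h3, h0])
  have hsum : a % m + b % m = m := by
    obtain ⟨k, hk⟩ := hdvd
    rcases k with _ | _ | k
    · omega
    · omega
    · have : m * (k + 2) = m * k + m * 2 := by ring
      nlinarith
  have key : m * (a / m + b / m + 1) = m * r := by
    have e : m * (a / m + b / m + 1) = m * (a / m) + m * (b / m) + m := by ring
    rw [e]
    linarith [h1, h2, hab, hsum]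
  have := Nat.eq_of_mul_eq_mul_left hm key
  exact Nat.eq_sub_of_add_eq this

lemma stmt2_reflsum (m : ℕ) (f : ℕ → ℕ) :
    ∑ j ∈ Finset.Icc 1 (m-1), f (m - j) = ∑ j ∈ Finset.Icc 1 (m-1), f j := by
  refine Finset.sum_nbij' (i := fun j => m - j) (j := fun j => m - j) ?_ ?_ ?_ ?_ ?_ <;>
      simp only [Finset.mem_Icc] <;> intro a ha <;> first | trivial | omega

lemma stmt2_floorsum (r m : ℕ) (hm : 2 ≤ m) (hco : Nat.Coprime r m) :
    2 * ∑ j ∈ Finset.Icc 1 (m-1), r * j / m = (m - 1) * (r - 1) := by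
  have key : ∀ j ∈ Finset.Icc 1 (m-1), r * j / m + r * (m - j) / m = r - 1 := by
    intro j hj
    simp only [Finset.mem_Icc] at hj
    apply stmt2_pair r m _ _ (by omega)
    · rw [← Nat.mul_add]
      congr 1
      omega
    · intro hd
      have h1 : m ∣ j := Nat.Coprime.dvd_of_dvd_mul_left hco.symm hd
      have h2 := Nat.le_of_dvd (by omega) h1
      omega
  have h2 : 2 * ∑ j ∈ Finset.Icc 1 (m-1), r * j / m
      = ∑ j ∈ Finset.Icc 1 (m-1), (r * j / m + r * (m - j) / m) := by
    rw [Finset.sum_add_distrib, two_mul]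
    congr 1
    exact (stmt2_reflsum m (fun j => r * j / m)).symm
  rw [h2, Finset.sum_congr rfl key, Finset.sum_const, Nat.card_Icc, smul_eq_mul]
  congr 1

/-- For coprime positive integers `r, m`, with `l j = r - ⌊rj/m⌋`,
`s j = l j - l (j+1)` for `j < m - 1 - ⌊m/r⌋` and `s (m-1-⌊m/r⌋) = l (m-1-⌊m/r⌋) - 1`,
we have `∑_{j=1}^{m-1-⌊m/r⌋} j·s j = (m-1)(r-1)/2`. -/
theorem stmt2 (r m : ℕ) (hr : 0 < r) (hm : 0 < m) (hco : Nat.Coprime r m)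
    (l s : ℕ → ℕ)
    (hl : ∀ j, l j = r - r * j / m)
    (hs : ∀ j, 1 ≤ j → j < m - 1 - m / r → s j = l j - l (j + 1))
    (hs' : s (m - 1 - m / r) = l (m - 1 - m / r) - 1) :
    ∑ j ∈ Finset.Icc 1 (m - 1 - m / r), j * s j = (m - 1) * (r - 1) / 2 := by
  by_cases hr1 : r = 1
  · subst hr1
    rw [show m - 1 - m / 1 = 0 by omega]
    simp
  by_cases hm1 : m = 1
  · subst hm1
    rw [show 1 - 1 - 1 / r = 0 by rw [Nat.sub_self, Nat.zero_sub]]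
    simp
  have hr2 : 2 ≤ r := by omega
  have hm2 : 2 ≤ m := by omega
  have hrm : ¬ r ∣ m := by
    intro h
    have h1 : r ∣ 1 := hco ▸ Nat.dvd_gcd dvd_rfl h
    have := Nat.le_of_dvd one_pos h1
    omega
  have hmodr : 0 < m % r := Nat.pos_of_ne_zero (fun h => hrm (Nat.dvd_of_mod_eq_zero h))
  have hdivlt : m / r < m := Nat.div_lt_self (by omega) hr2
  have hdm := Nat.div_add_mod m r
  have hmodlt := Nat.mod_lt m (show 0 < r by omega)
  -- generalize the division and remainder to avoid omega issues
  obtain ⟨D, hD⟩ : ∃ D, m / r = D := ⟨_, rfl⟩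
  obtain ⟨E, hE⟩ : ∃ E, m % r = E := ⟨_, rfl⟩
  rw [hD] at hdivlt hdm hs hs' ⊢
  rw [hE] at hmodr hdm hmodlt
  have hdivle : D ≤ m - 1 := by omega
  set N := m - 1 - D with hN
  -- basic bound: for 1 ≤ j ≤ m-1, r*j/m ≤ r-1 hence l j ≥ 1
  have hlb : ∀ j, 1 ≤ j → j ≤ m - 1 → r * j / m ≤ r - 1 ∧ 1 ≤ l j := by
    intro j h1 h2
    have hlt : r * j < m * r := by
      calc r * j < r * m := mul_lt_mul_of_pos_left (show j < m by omega) (show 0 < r by omega)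
        _ = m * r := Nat.mul_comm r m
    have hq : r * j / m < r := Nat.div_lt_of_lt_mul hlt
    obtain ⟨q, hqe⟩ : ∃ q, r * j / m = q := ⟨_, rfl⟩
    rw [hqe] at hq ⊢
    exact ⟨by omega, by rw [hl j, hqe]; omega⟩
  -- monotonicity of l
  have hmono : ∀ j, l (j+1) ≤ l j := by
    intro j
    rw [hl, hl]
    have h := Nat.div_le_div_right (c := m) (Nat.mul_le_mul_left r (show j ≤ j + 1 by omega))
    obtain ⟨q1, hq1⟩ : ∃ q, r * j / m = q := ⟨_, rfl⟩
    obtain ⟨q2, hq2⟩ : ∃ q, r * (j+1) / m = q := ⟨_, rfl⟩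
    rw [hq1, hq2] at h ⊢
    omega
  -- l j = 1 for N+1 ≤ j ≤ m-1
  have hone : ∀ j, N + 1 ≤ j → j ≤ m - 1 → l j = 1 := by
    intro j hj1 hj2
    have hjge : m - D ≤ j := by omega
    have hle : (r - 1) * m ≤ r * j := by
      zify [show 1 ≤ r by omega]
      have hcast : (r : ℤ) * (D : ℤ) + (E : ℤ) = (m : ℤ) := by exact_mod_cast hdm
      have hjge' : (m : ℤ) - (D : ℤ) ≤ (j : ℤ) := by
        zify [show D ≤ m by omega] at hjge
        exact hjge
      have hmul : (r : ℤ) * ((m : ℤ) - (D : ℤ)) ≤ (r : ℤ) * j :=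
        mul_le_mul_of_nonneg_left hjge' (by positivity)
      have he1 : (1 : ℤ) ≤ (E : ℤ) := by exact_mod_cast hmodr
      nlinarith [hcast, hmul, he1]
    have hlt2 : r * j < r * m :=
      mul_lt_mul_of_pos_left (show j < m by omega) (show 0 < r by omega)
    have hq : r * j / m = r - 1 :=
      Nat.div_eq_of_lt_le hle (by rw [Nat.sub_add_cancel (show 1 ≤ r by omega)]; exact hlt2)
    rw [hl, hq]
    omega
  -- step function for telescoping
  have hstep : ∀ j ∈ Finset.Icc 1 N, ((j * s j : ℕ) : ℤ)
      = (j : ℤ) * ((fun i => if i ≤ N then (l i : ℤ) else 1) j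
          - (fun i => if i ≤ N then (l i : ℤ) else 1) (j+1)) := by
    intro j hj
    simp only [Finset.mem_Icc] at hj
    have hNm : N ≤ m - 1 := by omega
    simp only
    rw [if_pos hj.2]
    rcases eq_or_lt_of_le hj.2 with hEq | hlt
    · rw [if_neg (by omega)]
      have h1 := (hlb j hj.1 (by omega)).2
      have hsj : s j = l j - 1 := by rw [hEq]; exact hs'
      rw [hsj]
      push_cast [Nat.cast_sub h1]
      ring
    · rw [if_pos (by omega : j + 1 ≤ N)]
      rw [hs j hj.1 (by omega)]
      push_cast [Nat.cast_sub (hmono j)]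
      ring
  have hS : ((∑ j ∈ Finset.Icc 1 N, j * s j : ℕ) : ℤ)
      = (∑ j ∈ Finset.Icc 1 N, (l j : ℤ)) - N := by
    rw [Nat.cast_sum, Finset.sum_congr rfl hstep, stmt2_tele]
    have h1 : ∑ j ∈ Finset.Icc 1 N, (if j ≤ N then (l j : ℤ) else 1)
        = ∑ j ∈ Finset.Icc 1 N, (l j : ℤ) :=
      Finset.sum_congr rfl (fun j hj => if_pos (Finset.mem_Icc.mp hj).2)
    rw [h1, if_neg (by omega)]
    ring
  -- split the full sum
  have hsplit : (∑ j ∈ Finset.Icc 1 (m-1), (l j : ℤ))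
      = (∑ j ∈ Finset.Icc 1 N, (l j : ℤ)) + (D : ℤ) := by
    have hc := Finset.sum_Ioc_consecutive (fun j => (l j : ℤ))
      (Nat.zero_le N) (show N ≤ m - 1 by omega)
    rw [show Finset.Icc 1 (m-1) = Finset.Ioc 0 (m-1) from Finset.Icc_add_one_left_eq_Ioc 0 (m-1),
        show Finset.Icc 1 N = Finset.Ioc 0 N from Finset.Icc_add_one_left_eq_Ioc 0 N, ← hc]
    congr 1
    have h1 : ∀ j ∈ Finset.Ioc N (m-1), (l j : ℤ) = 1 := by
      intro j hj
      have := Finset.mem_Ioc.mp hj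
      rw [hone j (by omega) (by omega)]
      norm_num
    rw [Finset.sum_congr rfl h1, Finset.sum_const, Nat.card_Ioc, nsmul_eq_mul, mul_one]
    norm_cast
    omega
  -- value of the full sum
  have hfs := stmt2_floorsum r m hm2 hco
  have hfull : 2 * (∑ j ∈ Finset.Icc 1 (m-1), (l j : ℤ))
      = 2 * ((m : ℤ) - 1) * r - ((m : ℤ) - 1) * ((r : ℤ) - 1) := by
    have h1 : ∑ j ∈ Finset.Icc 1 (m-1), (l j : ℤ)
        = ∑ j ∈ Finset.Icc 1 (m-1), ((r : ℤ) - ((r * j / m : ℕ) : ℤ)) := by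
      apply Finset.sum_congr rfl
      intro j hj
      have hb := (hlb j (Finset.mem_Icc.mp hj).1 (Finset.mem_Icc.mp hj).2).1
      rw [hl j]
      push_cast [Nat.cast_sub (show r * j / m ≤ r by omega)]
      ring
    rw [h1, Finset.sum_sub_distrib, Finset.sum_const, Nat.card_Icc,
        show m - 1 + 1 - 1 = m - 1 from rfl, nsmul_eq_mul]
    have h2 : ((2 * ∑ j ∈ Finset.Icc 1 (m-1), r * j / m : ℕ) : ℤ)
        = (((m - 1) * (r - 1) : ℕ) : ℤ) := Nat.cast_inj.mpr hfs
    push_cast [Nat.cast_sub (show 1 ≤ m by omega), Nat.cast_sub (show 1 ≤ r by omega)] at h2 ⊢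
    linarith [h2]
  -- combine
  have hNmr : (N : ℤ) + (D : ℤ) = (m : ℤ) - 1 := by
    have h : N + D = m - 1 := by omega
    zify [show 1 ≤ m by omega] at h
    exact h
  have final : 2 * (∑ j ∈ Finset.Icc 1 N, j * s j) = (m - 1) * (r - 1) := by
    have hz : ((2 * ∑ j ∈ Finset.Icc 1 N, j * s j : ℕ) : ℤ)
        = (((m - 1) * (r - 1) : ℕ) : ℤ) := by
      rw [Nat.cast_mul, hS]
      push_cast [Nat.cast_sub (show 1 ≤ m by omega), Nat.cast_sub (show 1 ≤ r by omega)]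
      linarith [hsplit, hfull, hNmr]
    exact_mod_cast hz
  obtain ⟨K, hK⟩ : ∃ K, (m - 1) * (r - 1) = K := ⟨_, rfl⟩
  rw [hK] at final ⊢
  omega
end

section
/- Let q ≥ 2 and r ≥ 2 be positive integers and u = (q^r - 1)/(q - 1). For every j with 1 ≤ j ≤ q^{r-1} - 1, the integer ⌊ju/q^{r-1}⌋ is not divisible by q. -/
set_option maxHeartbeats 1600000 in
/-- For `q ≥ 2`, `r ≥ 2`, `u = (q^r - 1)/(q - 1)` and
`1 ≤ j ≤ q^{r-1} - 1`, the integer `⌊ju/q^{r-1}⌋` is not divisible by `q`. -/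
theorem stmt4 (q r u : ℕ) (hq : 2 ≤ q) (hr : 2 ≤ r)
    (hu : u = (q ^ r - 1) / (q - 1))
    (j : ℕ) (h1 : 1 ≤ j) (h2 : j ≤ q ^ (r - 1) - 1) :
    ¬ q ∣ j * u / q ^ (r - 1) := by
  obtain ⟨m, hmdef⟩ : ∃ m, q ^ (r - 1) = m := ⟨_, rfl⟩
  rw [hmdef] at h2 ⊢
  rintro ⟨c, hc⟩
  have hm0 : 0 < m := hmdef ▸ Nat.pow_pos (by omega)
  have hmq : q ≤ m := by
    rw [← hmdef]
    calc q = q ^ 1 := (pow_one q).symm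
    _ ≤ q ^ (r - 1) := Nat.pow_le_pow_right (by omega) (by omega)
  have hqr : q ^ r = q * m := by
    rw [← hmdef, ← pow_succ']
    congr 1; omega
  have hdvd : q - 1 ∣ q ^ r - 1 := by
    simpa using Nat.sub_dvd_pow_sub_pow q 1 r
  have huq : u * (q - 1) = q * m - 1 := by
    rw [hu, Nat.div_mul_cancel hdvd, hqr]
  have hqm1 : 1 ≤ q * m := by nlinarith
  have huqZ : (u : ℤ) * ((q : ℤ) - 1) = (q : ℤ) * m - 1 := by
    have h := congrArg (Nat.cast : ℕ → ℤ) huq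
    push_cast [Nat.cast_sub (show 1 ≤ q by omega), Nat.cast_sub hqm1] at h
    linarith
  have k1 : (q * c) * m ≤ j * u := by
    rw [← hc]; exact Nat.div_mul_le_self (j * u) m
  have k2 : j * u < (q * c + 1) * m := by
    rw [← hc]
    exact (Nat.div_lt_iff_lt_mul hm0).mp (Nat.lt_succ_self _)
  have h2Z : (j : ℤ) ≤ (m : ℤ) - 1 := by
    zify [show 1 ≤ m from hm0] at h2; exact h2
  have k1Z : ((q : ℤ) * c) * m ≤ (j : ℤ) * u := by exact_mod_cast k1
  have k2Z : (j : ℤ) * u ≤ ((q : ℤ) * c + 1) * m - 1 := by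
    have : (j : ℤ) * u < ((q : ℤ) * c + 1) * m := by exact_mod_cast k2
    omega
  have hqZ : (2 : ℤ) ≤ (q : ℤ) := by exact_mod_cast hq
  have h1Z : (1 : ℤ) ≤ (j : ℤ) := by exact_mod_cast h1
  have hc0 : (0 : ℤ) ≤ (c : ℤ) := by positivity
  have hmZ : (q : ℤ) ≤ (m : ℤ) := by exact_mod_cast hmq
  have hqmpos : (0 : ℤ) < (q : ℤ) * m := by nlinarith
  -- Step 1: c * (q - 1) < j
  have s1 : (c : ℤ) * ((q : ℤ) - 1) < (j : ℤ) := by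
    have e1 : ((q : ℤ) * c) * m * ((q : ℤ) - 1) ≤ (j : ℤ) * u * ((q : ℤ) - 1) := by
      apply mul_le_mul_of_nonneg_right k1Z
      linarith
    have e2 : (j : ℤ) * u * ((q : ℤ) - 1) = (j : ℤ) * ((q : ℤ) * m) - j := by
      calc (j : ℤ) * u * ((q : ℤ) - 1) = (j : ℤ) * ((u : ℤ) * ((q : ℤ) - 1)) := by ring
      _ = (j : ℤ) * ((q : ℤ) * m - 1) := by rw [huqZ]
      _ = (j : ℤ) * ((q : ℤ) * m) - j := by ring
    have e3 : ((c : ℤ) * ((q : ℤ) - 1)) * ((q : ℤ) * m) < (j : ℤ) * ((q : ℤ) * m) := by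
      nlinarith
    exact lt_of_mul_lt_mul_right e3 (le_of_lt hqmpos)
  -- Step 2: j < c * (q - 1) + 1
  have s2 : (j : ℤ) < (c : ℤ) * ((q : ℤ) - 1) + 1 := by
    have e1 : (j : ℤ) * u * ((q : ℤ) - 1) ≤ (((q : ℤ) * c + 1) * m - 1) * ((q : ℤ) - 1) := by
      apply mul_le_mul_of_nonneg_right k2Z
      linarith
    have e2 : (j : ℤ) * u * ((q : ℤ) - 1) = (j : ℤ) * ((q : ℤ) * m) - j := by
      calc (j : ℤ) * u * ((q : ℤ) - 1) = (j : ℤ) * ((u : ℤ) * ((q : ℤ) - 1)) := by ring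
      _ = (j : ℤ) * ((q : ℤ) * m - 1) := by rw [huqZ]
      _ = (j : ℤ) * ((q : ℤ) * m) - j := by ring
    have e3 : ((j : ℤ) * q) * m < (((q : ℤ) * c + 1) * ((q : ℤ) - 1) + 1) * m := by
      rw [e2] at e1
      ring_nf at e1 ⊢
      linarith [h2Z, hqZ]
    have e4 : (j : ℤ) * q < ((q : ℤ) * c + 1) * ((q : ℤ) - 1) + 1 := by
      have hmpos : (0 : ℤ) < (m : ℤ) := by exact_mod_cast hm0
      exact lt_of_mul_lt_mul_right e3 (le_of_lt hmpos)
    have e5 : ((j : ℤ)) * q < ((c : ℤ) * ((q : ℤ) - 1) + 1) * q := by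
      have : ((q : ℤ) * c + 1) * ((q : ℤ) - 1) + 1 = ((c : ℤ) * ((q : ℤ) - 1) + 1) * q := by ring
      linarith
    have hqpos : (0 : ℤ) < (q : ℤ) := by linarith
    exact lt_of_mul_lt_mul_right e5 (le_of_lt hqpos)
  omega
end
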